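/- Under the simulation relation between a finite abstraction and a continuous system, if the abstract maximal controlled invariant set Q^I inside the safe abstract states satisfies the invariance condition, then its concretization Ĩ = ⋃_{q ∈ Q^I} P(q) is contained in the maximal robust controlled invariant set I of the continuous system inside S. -/
import Mathlib


def RobustControlledInvariant {Z V W : Type*} (f : Z → V → W → Z) (C : Set Z) : Prop :=
  ∀ z ∈ C, ∃ v : V, ∀ w : W, f z v w ∈ C

theorem concretization_subset_maximal {X U D Q : Type*} [Finite Q] [Finite U]
    (F : X → U → D → X) (P : Q → Set X) (δ : Q → U → Set Q)
    (hcover : (⋃ q : Q, P q) = Set.univ)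
    (hdisj : ∀ qa qb : Q, qa ≠ qb → P qa ∩ P qb = ∅)
    (hsim : ∀ (x : X) (u : U) (d : D) (q q' : Q),
      x ∈ P q → F x u d ∈ P q' → q' ∈ δ q u)
    (QS : Set Q) (S : Set X) (hS : S = ⋃ q ∈ QS, P q)
    (QI : Set Q) (hQIS : QI ⊆ QS) (hQI : ∀ q ∈ QI, ∃ u : U, δ q u ⊆ QI) :
    (⋃ q ∈ QI, P q) ⊆
      ⋃₀ {C : Set X | RobustControlledInvariant F C ∧ C ⊆ S} := by
  intro x hx
  refine ⟨⋃ q ∈ QI, P q, ⟨?_, ?_⟩, hx⟩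
  · intro z hz
    obtain ⟨q, hq, hzq⟩ := Set.mem_iUnion₂.mp hz
    obtain ⟨u, hu⟩ := hQI q hq
    refine ⟨u, fun d => ?_⟩
    have : F z u d ∈ (⋃ q : Q, P q) := by rw [hcover]; trivial
    obtain ⟨q', hq'⟩ := Set.mem_iUnion.mp this
    exact Set.mem_iUnion₂.mpr ⟨q', hu (hsim z u d q q' hzq hq'), hq'⟩
  · rw [hS]
    exact Set.iUnion₂_mono' fun q hq => ⟨q, hQIS hq, le_rfl⟩
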